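/- (Proposition 1, per-block form.) Let d, n be positive natural numbers, let r : Fin n → Fin n → ℝ satisfy r i j ≥ 0, r i j = r j i, r i i = 0, fix k ∈ Fin n and vectors w_1,…,w_n ∈ ℝ^d such that w_i ≠ w_k for every i with r i k ≠ 0. Then the function g : ℝ^d → ℝ defined by g(u) = Σ_{i,j=1}^n r_{ij} ‖v_i(u) − v_j(u)‖₂, where v_k(u) = u and v_i(u) = w_i for i ≠ k, is differentiable at w_k, and its gradient at w_k equals 2 Σ_{i=1}^n r_{ik} (w_k − w_i)/‖w_k − w_i‖₂ (terms with r_{ik} = 0 being zero). -/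

import Mathlib

open Finset

section Aux

variable {E : Type*} [NormedAddCommGroup E] [InnerProductSpace ℝ E] [CompleteSpace E]

lemma aux_hasGradientAt_norm {x : E} (hx : x ≠ 0) :
    HasGradientAt (fun u : E => ‖u‖) (‖x‖⁻¹ • x) x := by
  rw [hasGradientAt_iff_hasFDerivAt]
  have hsq : HasFDerivAt (fun u : E => ‖u‖ ^ 2) (2 • (innerSL ℝ x)) x :=
    (hasStrictFDerivAt_norm_sq x).hasFDerivAt
  have hx' : ‖x‖ ≠ 0 := norm_ne_zero_iff.mpr hx
  have hne : ‖x‖ ^ 2 ≠ 0 := pow_ne_zero _ hx'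
  have h := hsq.sqrt hne
  have hfun : (fun y : E => Real.sqrt (‖y‖ ^ 2)) = fun y : E => ‖y‖ := by
    funext y; rw [Real.sqrt_sq (norm_nonneg y)]
  rw [hfun] at h
  convert h using 1
  · rfl
  ext y
  simp only [InnerProductSpace.toDual_apply_apply, real_inner_smul_left,
    ContinuousLinearMap.smul_apply, innerSL_apply_apply, smul_eq_mul,
    Real.sqrt_sq (norm_nonneg x)]
  field_simp
  ring

lemma aux_hasGradientAt_norm_sub {x a : E} (h : x ≠ a) :
    HasGradientAt (fun u : E => ‖u - a‖) (‖x - a‖⁻¹ • (x - a)) x := by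
  rw [hasGradientAt_iff_hasFDerivAt] at *
  have hxa : x - a ≠ 0 := sub_ne_zero.mpr h
  have h1 := aux_hasGradientAt_norm hxa
  rw [hasGradientAt_iff_hasFDerivAt] at h1
  have h2 : HasFDerivAt (fun u : E => u - a) (ContinuousLinearMap.id ℝ E) x :=
    (hasFDerivAt_id x).sub_const a
  have := h1.comp x h2
  rw [ContinuousLinearMap.comp_id] at this
  exact this

lemma aux_const_mul {f : E → ℝ} {g : E} {x : E} (c : ℝ) (h : HasGradientAt f g x) :
    HasGradientAt (fun u => c * f u) (c • g) x := by
  rw [hasGradientAt_iff_hasFDerivAt] at *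
  have hc := h.const_mul c
  convert hc using 1
  · rfl
  ext y
  simp [InnerProductSpace.toDual_apply_apply, real_inner_smul_left]

lemma aux_sum {ι : Type*} (s : Finset ι) (f : ι → E → ℝ) (g : ι → E) (x : E)
    (h : ∀ i ∈ s, HasGradientAt (f i) (g i) x) :
    HasGradientAt (fun u => ∑ i ∈ s, f i u) (∑ i ∈ s, g i) x := by
  simp only [hasGradientAt_iff_hasFDerivAt] at *
  have := HasFDerivAt.fun_sum h
  have e : InnerProductSpace.toDual ℝ E (∑ i ∈ s, g i) = ∑ i ∈ s, InnerProductSpace.toDual ℝ E (g i) :=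
    map_sum _ _ _
  rw [e]
  exact this

end Aux

/-- Proposition 1 (per-block form): the partial gradient of the network
regularizer `Σ_{i,j} r_{ij} ‖w_i − w_j‖₂` with respect to the `k`-th block,
at a point where `w_i ≠ w_k` whenever `r i k ≠ 0`, equals
`2 Σ_i (r_{ik} / ‖w_k − w_i‖₂) • (w_k − w_i)`. -/
theorem network_regularizer_block_gradient
    (d n : ℕ) (hd : 0 < d) (hn : 0 < n)
    (r : Fin n → Fin n → ℝ)
    (hr : ∀ i j, 0 ≤ r i j) (hrsym : ∀ i j, r i j = r j i)
    (hrdiag : ∀ i, r i i = 0)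
    (k : Fin n) (w : Fin n → EuclideanSpace ℝ (Fin d))
    (hw : ∀ i, r i k ≠ 0 → w i ≠ w k) :
    HasGradientAt
      (fun u : EuclideanSpace ℝ (Fin d) =>
        ∑ i, ∑ j,
          r i j * ‖(fun m => if m = k then u else w m) i
                    - (fun m => if m = k then u else w m) j‖)
      (∑ i, (2 * r i k / ‖w k - w i‖) • (w k - w i))
      (w k) := by
  classical
  set G : Fin n → Fin n → EuclideanSpace ℝ (Fin d) := fun i j =>
    (if i = k then (r i j / ‖w k - w j‖) • (w k - w j) else 0)
      + (if j = k then (r i j / ‖w k - w i‖) • (w k - w i) else 0) with hG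
  have key : ∀ i j : Fin n,
      HasGradientAt
        (fun u : EuclideanSpace ℝ (Fin d) =>
          r i j * ‖(if i = k then u else w i) - (if j = k then u else w j)‖)
        (G i j) (w k) := by
    intro i j
    by_cases hik : i = k
    · by_cases hjk : j = k
      · -- i = k, j = k : constant zero
        have hfun : (fun u : EuclideanSpace ℝ (Fin d) =>
            r i j * ‖(if i = k then u else w i) - (if j = k then u else w j)‖)
            = fun _ => (0 : ℝ) := by
          funext u; simp [hik, hjk, hik.trans hjk.symm ▸ (by rw [hik, hjk, hrdiag] : r i j = 0)]
        have hG0 : G i j = 0 := by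
          simp [hG, hik, hjk, div_eq_mul_inv]
        rw [hfun, hG0]
        exact hasGradientAt_const _ _
      · -- i = k, j ≠ k
        have hG0 : G i j = (r i j / ‖w k - w j‖) • (w k - w j) := by
          simp [hG, hik, hjk]
        have hfun : (fun u : EuclideanSpace ℝ (Fin d) =>
            r i j * ‖(if i = k then u else w i) - (if j = k then u else w j)‖)
            = fun u => r i j * ‖u - w j‖ := by
          funext u; simp [hik, hjk]
        rw [hfun, hG0]
        by_cases hr0 : r i j = 0
        · have : (fun u : EuclideanSpace ℝ (Fin d) => r i j * ‖u - w j‖)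
              = fun _ => (0 : ℝ) := by funext u; simp [hr0]
          rw [this, hr0]
          simpa using hasGradientAt_const (w k) (0 : ℝ)
        · have hr0' : r j k ≠ 0 := by rw [← hik, ← hrsym]; exact hr0
          have hne : w k ≠ w j := (hw j hr0').symm
          have h1 := aux_const_mul (r i j) (aux_hasGradientAt_norm_sub hne)
          convert h1 using 1
          rw [smul_smul, div_eq_mul_inv]
    · by_cases hjk : j = k
      · -- i ≠ k, j = k
        have hG0 : G i j = (r i j / ‖w k - w i‖) • (w k - w i) := by
          simp [hG, hik, hjk]
        have hfun : (fun u : EuclideanSpace ℝ (Fin d) =>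
            r i j * ‖(if i = k then u else w i) - (if j = k then u else w j)‖)
            = fun u => r i j * ‖u - w i‖ := by
          funext u; simp only [if_neg hik, if_pos hjk]; rw [norm_sub_rev]
        rw [hfun, hG0]
        by_cases hr0 : r i j = 0
        · have : (fun u : EuclideanSpace ℝ (Fin d) => r i j * ‖u - w i‖)
              = fun _ => (0 : ℝ) := by funext u; simp [hr0]
          rw [this]
          have hz : (r i j / ‖w k - w i‖) • (w k - w i) = 0 := by simp [hr0]
          rw [hz]
          exact hasGradientAt_const _ _
        · have hr0' : r i k ≠ 0 := by rw [← hjk]; exact hr0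
          have hne : w k ≠ w i := (hw i hr0').symm
          have h1 := aux_const_mul (r i j) (aux_hasGradientAt_norm_sub hne)
          convert h1 using 1
          rw [smul_smul, div_eq_mul_inv]
      · -- both ≠ k : constant
        have hG0 : G i j = 0 := by simp [hG, hik, hjk]
        have hfun : (fun u : EuclideanSpace ℝ (Fin d) =>
            r i j * ‖(if i = k then u else w i) - (if j = k then u else w j)‖)
            = fun _ => r i j * ‖w i - w j‖ := by
          funext u; simp [hik, hjk]
        rw [hfun, hG0]
        exact hasGradientAt_const _ _
  have hsum : HasGradientAt
      (fun u : EuclideanSpace ℝ (Fin d) => ∑ i, ∑ j,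
          r i j * ‖(if i = k then u else w i) - (if j = k then u else w j)‖)
      (∑ i, ∑ j, G i j) (w k) := by
    apply aux_sum
    intro i _
    apply aux_sum
    intro j _
    exact key i j
  have hGsum : (∑ i, ∑ j, G i j)
      = ∑ i, (2 * r i k / ‖w k - w i‖) • (w k - w i) := by
    simp only [hG, Finset.sum_add_distrib]
    rw [Finset.sum_comm]
    simp only [Finset.sum_ite_eq', Finset.mem_univ, if_true]
    rw [← Finset.sum_add_distrib]
    apply Finset.sum_congr rfl
    intro i _
    rw [hrsym k i, ← add_smul, ← add_div, two_mul]
  rw [hGsum] at hsum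
  exact hsum
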